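/- For every g ≥ 1, every 1-backbone shape of genus g has at most 4g boundary components, i.e. r ≤ 4g. -/

import Mathlib

namespace RNA

noncomputable section

/-- The forward orbit of `x` under iteration of `f`. -/
def orbitOf (f : ℕ → ℕ) (x : ℕ) : Set ℕ := {y | ∃ j : ℕ, f^[j] x = y}

/-- The number of cycles (orbits) of `f` among the points `< k`. -/
def numCyclesOn (f : ℕ → ℕ) (k : ℕ) : ℕ :=
  Set.ncard {S : Set ℕ | ∃ x, x < k ∧ S = orbitOf f x}

/-- The number of cycles of length at least `3` among the points `< k` (multiloops). -/
def numMultiOn (f : ℕ → ℕ) (k : ℕ) : ℕ :=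
  Set.ncard {S : Set ℕ | (∃ x, x < k ∧ S = orbitOf f x) ∧ 3 ≤ S.ncard}

/-- The cyclic permutation `(0 1 ⋯ k-1)`, as a function on `ℕ` fixing everything `≥ k`. -/
def gammaOne (k : ℕ) : ℕ → ℕ := fun i => if i + 1 = k then 0 else if i < k then i + 1 else i

/-- The permutation with the two cycles `(0 ⋯ m-1)` and `(m ⋯ k-1)`. -/
def gammaTwo (m k : ℕ) : ℕ → ℕ := fun i =>
  if i + 1 = m then 0 else if i + 1 = k then m else if i < k then i + 1 else i

/-- A planted 1-backbone diagram with `n` arcs: an involution on the vertices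
`0, 1, …, 2n-1` (shifting the paper's labels `1, …, 2n` by one). -/
structure OneD where
  n : ℕ
  f : ℕ → ℕ

namespace OneD

/-- Well-formedness: `n ≥ 1`, `f` is a fixed-point-free involution of `{0, …, 2n-1}`
(extended by the identity elsewhere) pairing `0` with `2n-1` (the rainbow). -/
def WF (D : OneD) : Prop :=
  1 ≤ D.n ∧ (∀ i, i < 2 * D.n → D.f i < 2 * D.n) ∧
    (∀ i, 2 * D.n ≤ i → D.f i = i) ∧ (∀ i, D.f (D.f i) = i) ∧
    (∀ i, i < 2 * D.n → D.f i ≠ i) ∧ D.f 0 = 2 * D.n - 1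

/-- `{i,j}` is an arc. -/
def arc (D : OneD) (i j : ℕ) : Prop := i < 2 * D.n ∧ D.f i = j

/-- A shape: no 1-arc other than possibly the rainbow, and no stack
(no pair of arcs `{i,j}`, `{i+1,j-1}` with `i+1 < j-1`). -/
def IsShape (D : OneD) : Prop :=
  (∀ i, D.arc i (i + 1) → i = 0 ∧ i + 1 = 2 * D.n - 1) ∧
  (∀ i j, D.arc i j → D.arc (i + 1) (j - 1) → ¬ (i + 1 < j - 1))

/-- The boundary permutation `α ∘ γ`. -/
def bd (D : OneD) : ℕ → ℕ := D.f ∘ gammaOne (2 * D.n)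

/-- The number `r` of boundary components. -/
def r (D : OneD) : ℕ := numCyclesOn D.bd (2 * D.n)

/-- The number of multiloops: boundary components of length at least 3. -/
def nMulti (D : OneD) : ℕ := numMultiOn D.bd (2 * D.n)

/-- The genus `g`, defined by `2 - 2g - r = 1 - n`. -/
def HasGenus (D : OneD) (g : ℕ) : Prop := 2 * g + D.r = D.n + 1

/-- A-shape: the vertex following the partner of vertex `1` (paper's vertex `2`)
is paired with vertex `2n-2` (paper's vertex `2n-1`); only for `n ≥ 2`. -/
def IsA (D : OneD) : Prop := 2 ≤ D.n ∧ D.f (D.f 1 + 1) = 2 * D.n - 2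

/-- B-shape: a shape with `n ≥ 2` arcs which is not an A-shape. -/
def IsB (D : OneD) : Prop := 2 ≤ D.n ∧ D.f (D.f 1 + 1) ≠ 2 * D.n - 2

end OneD

/-- The set of 1-backbone shapes of genus `g`. -/
def oneShapeSet (g : ℕ) : Set OneD := {D | D.WF ∧ D.IsShape ∧ D.HasGenus g}

/-- The set of 1-backbone shapes of genus `g` with `n` arcs. -/
def oneShapeSetN (g n : ℕ) : Set OneD := {D | D ∈ oneShapeSet g ∧ D.n = n}

/-- The set of A-shapes of genus `g`. -/
def ASet (g : ℕ) : Set OneD := {D | D ∈ oneShapeSet g ∧ D.IsA}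

/-- The set `𝒜_g(n)` of A-shapes of genus `g` with `n` arcs. -/
def ASetN (g n : ℕ) : Set OneD := {D | D ∈ oneShapeSetN g n ∧ D.IsA}

/-- The set `ℬ_g(n)` of B-shapes of genus `g` with `n` arcs. -/
def BSetN (g n : ℕ) : Set OneD := {D | D ∈ oneShapeSetN g n ∧ D.IsB}

/-- `s_g(n)`: the number of 1-backbone shapes of genus `g` with `n` arcs. -/
def sCount (g n : ℕ) : ℕ := (oneShapeSetN g n).ncard

/-- `a_g(n)`: the number of A-shapes of genus `g` with `n` arcs. -/
def aCount (g n : ℕ) : ℕ := (ASetN g n).ncard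

/-- A 2-backbone diagram with `n` arcs and cut point `m`: an involution on the
vertices `0, …, 2n-1`, with backbones `{0, …, m-1}` and `{m, …, 2n-1}`. -/
structure TwoD where
  n : ℕ
  m : ℕ
  f : ℕ → ℕ

namespace TwoD

/-- Well-formedness of a 2-backbone matching: two nonempty backbones and `f` a
fixed-point-free involution of `{0, …, 2n-1}` (extended by the identity). -/
def WF (D : TwoD) : Prop :=
  1 ≤ D.m ∧ D.m < 2 * D.n ∧ (∀ i, i < 2 * D.n → D.f i < 2 * D.n) ∧
    (∀ i, 2 * D.n ≤ i → D.f i = i) ∧ (∀ i, D.f (D.f i) = i) ∧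
    (∀ i, i < 2 * D.n → D.f i ≠ i)

/-- `{i,j}` is an arc. -/
def arc (D : TwoD) (i j : ℕ) : Prop := i < 2 * D.n ∧ D.f i = j

/-- `i` and `j` lie in the same backbone. -/
def sameBB (D : TwoD) (i j : ℕ) : Prop := (i < D.m ∧ j < D.m) ∨ (D.m ≤ i ∧ D.m ≤ j)

/-- Connectivity: some arc has one endpoint in each backbone. -/
def Connected (D : TwoD) : Prop := ∃ i j, D.arc i j ∧ i < D.m ∧ D.m ≤ j

/-- A 2-backbone shape: both rainbows `{0, m-1}` and `{m, 2n-1}` are present,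
there is no 1-arc (an arc `{i,i+1}` within one backbone) other than possibly the
rainbows, and no stack. -/
def IsShape (D : TwoD) : Prop :=
  2 ≤ D.m ∧ D.m + 2 ≤ 2 * D.n ∧ D.f 0 = D.m - 1 ∧ D.f D.m = 2 * D.n - 1 ∧
  (∀ i, D.arc i (i + 1) → D.sameBB i (i + 1) →
      (i = 0 ∧ i + 1 = D.m - 1) ∨ (i = D.m ∧ i + 1 = 2 * D.n - 1)) ∧
  (∀ i j, D.arc i j → D.arc (i + 1) (j - 1) → D.sameBB i (i + 1) →
      D.sameBB (j - 1) j → ¬ (i + 1 < j - 1))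

/-- The boundary permutation `α ∘ γ`. -/
def bd (D : TwoD) : ℕ → ℕ := D.f ∘ gammaTwo D.m (2 * D.n)

/-- The number `r` of boundary components. -/
def r (D : TwoD) : ℕ := numCyclesOn D.bd (2 * D.n)

/-- The number of multiloops: boundary components of length at least 3. -/
def nMulti (D : TwoD) : ℕ := numMultiOn D.bd (2 * D.n)

/-- The genus `g`, defined by `2 - 2g - r = 2 - n`. -/
def HasGenus (D : TwoD) (g : ℕ) : Prop := 2 * g + D.r = D.n

end TwoD

/-- The set `𝒬_g(n)` of connected 2-backbone shapes of genus `g` with `n` arcs. -/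
def twoShapeSetN (g n : ℕ) : Set TwoD :=
  {D | D.WF ∧ D.IsShape ∧ D.Connected ∧ D.HasGenus g ∧ D.n = n}

/-- `q_g(n)`: the number of connected 2-backbone shapes of genus `g` with `n` arcs. -/
def qCount (g n : ℕ) : ℕ := (twoShapeSetN g n).ncard

/-- The gluing map `η`: concatenate the two backbones (the two old rainbows become
ordinary arcs) and add a new rainbow over the resulting single backbone. -/
def glue (D : TwoD) : OneD :=
  ⟨D.n + 1, fun i =>
    if i = 0 then 2 * D.n + 1
    else if i = 2 * D.n + 1 then 0
    else if i ≤ 2 * D.n then D.f (i - 1) + 1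
    else i⟩

/-- Place an ordered pair of 1-backbone diagrams on two backbones,
each keeping its own rainbow. -/
def combine (S T : OneD) : TwoD :=
  ⟨S.n + T.n, 2 * S.n, fun i =>
    if i < 2 * S.n then S.f i
    else if i < 2 * (S.n + T.n) then T.f (i - 2 * S.n) + 2 * S.n
    else i⟩

/-- The set `𝒬'_g(N)`: the disjoint union of the set of connected 2-backbone shapes
of genus `g` with `N` arcs and the set of ordered pairs of 1-backbone shapes whose
genera are positive and sum to `g+1` and whose arc numbers sum to `N`. -/
def QprimeSetN (g N : ℕ) : Set (TwoD ⊕ OneD × OneD) :=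
  {x | Sum.elim
        (fun D : TwoD => D.WF ∧ D.IsShape ∧ D.Connected ∧ D.HasGenus g ∧ D.n = N)
        (fun p : OneD × OneD =>
          p.1.WF ∧ p.1.IsShape ∧ p.2.WF ∧ p.2.IsShape ∧
          (∃ g₁ g₂, 1 ≤ g₁ ∧ 1 ≤ g₂ ∧ g₁ + g₂ = g + 1 ∧
            p.1.HasGenus g₁ ∧ p.2.HasGenus g₂) ∧
          p.1.n + p.2.n = N) x}

/-- The gluing map `η` on `𝒬'`: glue a connected 2-backbone shape directly, and glue
a pair of 1-backbone shapes after placing them on two backbones. -/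
def etaMap : TwoD ⊕ OneD × OneD → OneD := Sum.elim glue fun p => glue (combine p.1 p.2)

/-- The 2-backbone diagram underlying an element of `𝒬'`. -/
def underlyingTwoD : TwoD ⊕ OneD × OneD → TwoD := Sum.elim id fun p => combine p.1 p.2

/-- Old label of the new vertex `k` after deleting the two points `a < b`. -/
def insTwo (a b k : ℕ) : ℕ := if k < a then k else if k + 1 < b then k + 1 else k + 2

/-- New label of the old vertex `j` after deleting the two points `a < b`. -/
def delTwo (a b j : ℕ) : ℕ := j - (if a < j then 1 else 0) - (if b < j then 1 else 0)

/-- The involution obtained from `f` by deleting the two paired points `a < b`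
and relabeling. -/
def deleteTwo (f : ℕ → ℕ) (a b : ℕ) : ℕ → ℕ := fun k => delTwo a b (f (insTwo a b k))

/-- The map `θ`: remove from an A-shape the arc joining the vertex following the
partner of vertex `1` (paper's vertex `2`) to the vertex `2n-2` (paper's `2n-1`),
deleting its two endpoints and relabeling. -/
def theta (D : OneD) : OneD := ⟨D.n - 1, deleteTwo D.f (D.f 1 + 1) (2 * D.n - 2)⟩

/-- The new cut point after deleting the points `a` and `b`. -/
def mshift (m a b : ℕ) : ℕ := m - (if a < m then 1 else 0) - (if b < m then 1 else 0)

/-- One reduction step: delete a 1-arc (an arc `{i,i+1}` within one backbone), or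
collapse a stack `{i,j}`, `{i+1,j-1}` by deleting the inner arc `{i+1,j-1}`. -/
def Step (M M' : TwoD) : Prop :=
  (∃ i, M.arc i (i + 1) ∧ M.sameBB i (i + 1) ∧
      M' = ⟨M.n - 1, mshift M.m i (i + 1), deleteTwo M.f i (i + 1)⟩) ∨
  (∃ i j, M.arc i j ∧ M.arc (i + 1) (j - 1) ∧ i + 1 < j - 1 ∧ M.sameBB i (i + 1) ∧
      M.sameBB (j - 1) j ∧
      M' = ⟨M.n - 1, mshift M.m (i + 1) (j - 1), deleteTwo M.f (i + 1) (j - 1)⟩)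

/-- A pure preshape: no 1-arc and no stack remain. -/
def Reduced (P : TwoD) : Prop :=
  (∀ i, ¬ (P.arc i (i + 1) ∧ P.sameBB i (i + 1))) ∧
  (∀ i j, P.arc i j → P.arc (i + 1) (j - 1) → P.sameBB i (i + 1) →
      P.sameBB (j - 1) j → ¬ (i + 1 < j - 1))

/-- Relabeling of an old vertex of a preshape after planting rainbows. -/
def newlab (m o : ℕ) : ℕ := if o < m then o + 1 else o + 3

/-- Plant a rainbow over each backbone of a pure preshape. -/
def plant (P : TwoD) : TwoD :=
  ⟨P.n + 2, P.m + 2, fun k =>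
    if k = 0 then P.m + 1
    else if k = P.m + 1 then 0
    else if k = P.m + 2 then 2 * P.n + 3
    else if k = 2 * P.n + 3 then P.m + 2
    else if k ≤ P.m then newlab P.m (P.f (k - 1))
    else if k ≤ 2 * P.n + 2 then newlab P.m (P.f (k - 3))
    else k⟩

/-- `s` is the shape of the 2-backbone matching `M`: iteratively collapse stacks and
delete 1-arcs until none remains, then add a rainbow over each backbone. -/
def ShapeOf (M s : TwoD) : Prop :=
  ∃ P : TwoD, Relation.ReflTransGen Step M P ∧ Reduced P ∧ s = plant P

/-- `q_s(n)`: the number of 2-backbone matchings with `n` arcs whose shape is `s`. -/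
def fiberCount (s : TwoD) (n : ℕ) : ℕ :=
  Set.ncard {M : TwoD | M.WF ∧ M.n = n ∧ ShapeOf M s}

/-- `w_g(n)`: the number of connected 2-backbone matchings with `n` arcs and genus `g`. -/
def wCount (g n : ℕ) : ℕ :=
  Set.ncard {M : TwoD | M.WF ∧ M.Connected ∧ M.HasGenus g ∧ M.n = n}

/-- `W_g(z) = Σ_n w_g(n) zⁿ`, as a formal power series. -/
def Wseries (g : ℕ) : PowerSeries ℤ := PowerSeries.mk fun n => (wCount g n : ℤ)

/-- The Catalan generating function `C₀(z) = Σ_n Catalan(n) zⁿ`. -/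
def catGF : PowerSeries ℤ := PowerSeries.mk fun n => (catalan n : ℤ)

/-- `q̃_g(l)`: the number of connected 2-backbone shapes of genus `g` having `l` arcs
besides their two rainbows. -/
def qlCount (g l : ℕ) : ℕ := qCount g (l + 2)

end



private lemma iterate_lt {f : ℕ → ℕ} {k : ℕ} (hk : ∀ y, y < k → f y < k)
    {x : ℕ} (hx : x < k) : ∀ j, f^[j] x < k := by
  intro j
  induction j with
  | zero => simpa
  | succ n ih => rw [Function.iterate_succ_apply']; exact hk _ ih

private lemma exists_period {f : ℕ → ℕ} (hf : Function.Injective f) {k : ℕ}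
    (hk : ∀ y, y < k → f y < k) {x : ℕ} (hx : x < k) :
    ∃ p, 0 < p ∧ f^[p] x = x := by
  obtain ⟨a, ha, b, hb, hab, heq⟩ := Finset.exists_ne_map_eq_of_card_lt_of_maps_to
    (s := Finset.range (k+1)) (t := Finset.range k) (by simp)
    (fun j _ => Finset.mem_range.mpr (iterate_lt hk hx j))
  wlog hlt : a < b generalizing a b
  · exact this b hb a ha hab.symm heq.symm (by omega)
  refine ⟨b - a, by omega, ?_⟩
  apply hf.iterate a
  rw [← Function.iterate_add_apply]
  have h : a + (b - a) = b := by omega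
  rw [h, heq]

private lemma orbit_eq_of_mem {f : ℕ → ℕ} (hf : Function.Injective f) {k : ℕ}
    (hk : ∀ y, y < k → f y < k) {x y : ℕ} (hx : x < k)
    (hy : y ∈ orbitOf f x) : orbitOf f y = orbitOf f x := by
  obtain ⟨j, rfl⟩ := hy
  ext z
  constructor
  · rintro ⟨i, rfl⟩
    exact ⟨i + j, Function.iterate_add_apply f i j x⟩
  · rintro ⟨i, rfl⟩
    obtain ⟨p, hp, hper⟩ := exists_period hf hk hx
    have hfix : f^[p * j] x = x := by
      rw [Function.iterate_mul]
      exact Function.iterate_fixed hper j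
    refine ⟨i + (p * j - j), ?_⟩
    rw [← Function.iterate_add_apply]
    have hjle : j ≤ p * j := Nat.le_mul_of_pos_left j hp
    have he : i + (p * j - j) + j = i + p * j := by omega
    rw [he, Function.iterate_add_apply, hfix]

private lemma orbit_fixedpt {f : ℕ → ℕ} {z : ℕ} (h : f z = z) : orbitOf f z = {z} := by
  ext w
  simp only [Set.mem_singleton_iff]
  constructor
  · rintro ⟨j, rfl⟩; exact Function.iterate_fixed h j
  · rintro rfl; exact ⟨0, rfl⟩

/-- For every `g ≥ 1`, every 1-backbone shape of genus `g` has at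
most `4g` boundary components. -/
theorem boundary_components_le (g : ℕ) (hg : 1 ≤ g) (D : OneD)
    (hWF : D.WF) (hShape : D.IsShape) (hGenus : D.HasGenus g) :
    D.r ≤ 4 * g := by
  classical
  obtain ⟨hn1, hmap, hge, hinv, hfp, hrb⟩ := hWF
  obtain ⟨hs1, hs2⟩ := hShape
  have hGenus' : 2 * g + D.r = D.n + 1 := hGenus
  set k := 2 * D.n with hk
  obtain ⟨m, hm⟩ : ∃ m, k = m + 1 := ⟨k - 1, by omega⟩
  have hfinj : Function.Injective D.f := Function.LeftInverse.injective hinv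
  have hginj : Function.Injective (gammaOne k) := by
    intro a b h
    unfold gammaOne at h
    split_ifs at h <;> omega
  have hbdinj : Function.Injective D.bd := hfinj.comp hginj
  have hbdmap : ∀ y, y < k → D.bd y < k := by
    intro y hy
    have hγ : gammaOne k y < k := by unfold gammaOne; split_ifs <;> omega
    exact hmap _ hγ
  have hbdtop : D.bd m = m := by
    show D.f (gammaOne k m) = m
    have h1 : m + 1 = k := hm.symm
    have hrb' : D.f 0 = m := by omega
    simp [gammaOne, h1, hrb']
  have hrcard : D.r = ((Finset.range k).image (orbitOf D.bd)).card := by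
    have hset : {S : Set ℕ | ∃ x, x < k ∧ S = orbitOf D.bd x}
        = ↑((Finset.range k).image (orbitOf D.bd)) := by
      ext S
      simp only [Set.mem_setOf_eq, Finset.coe_image, Set.mem_image, Finset.mem_coe,
        Finset.mem_range]
      exact ⟨fun ⟨x, h1, h2⟩ => ⟨x, h1, h2.symm⟩, fun ⟨x, h1, h2⟩ => ⟨x, h1, h2.symm⟩⟩
    rw [OneD.r, numCyclesOn, ← hk, hset, Set.ncard_coe_finset]
  set t := (Finset.range m).image (orbitOf D.bd) with ht
  have htop_orbit : orbitOf D.bd m = {m} := orbit_fixedpt hbdtop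
  have hsplit : (Finset.range k).image (orbitOf D.bd) = insert (orbitOf D.bd m) t := by
    rw [hm, Finset.range_add_one, Finset.image_insert]
  have hnotmem : orbitOf D.bd m ∉ t := by
    rw [htop_orbit, ht]
    simp only [Finset.mem_image, Finset.mem_range, not_exists]
    rintro x ⟨hx, hox⟩
    have hxx : x ∈ orbitOf D.bd x := ⟨0, rfl⟩
    rw [hox] at hxx
    simp only [Set.mem_singleton_iff] at hxx
    omega
  have hrt : D.r = t.card + 1 := by
    rw [hrcard, hsplit, Finset.card_insert_of_notMem hnotmem]
  have hn2 : 4 ≤ k := by omega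
  have hgam : ∀ x, x < m → gammaOne k x = x + 1 := by
    intro x hx; unfold gammaOne; split_ifs <;> omega
  have hinvol : ∀ a b, D.f a = b → D.f b = a := fun a b h => by rw [← h, hinv]
  have no_fix : ∀ x, x < m → D.bd x ≠ x := by
    intro x hx hbd
    have hγx : D.bd x = D.f (x + 1) := by
      show D.f (gammaOne k x) = _
      rw [hgam x hx]
    rw [hγx] at hbd
    have hfx : D.f x = x + 1 := hinvol _ _ hbd
    have harc : D.arc x (x + 1) := ⟨by omega, hfx⟩
    have := hs1 x harc
    omega
  have no_two : ∀ x, x < m → D.bd (D.bd x) ≠ x := by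
    intro x hx hbd2
    have hγx : D.bd x = D.f (x + 1) := by
      show D.f (gammaOne k x) = _
      rw [hgam x hx]
    rw [hγx] at hbd2
    set y := D.f (x + 1) with hy
    have hyk : y < k := hmap _ (by omega)
    have hfy : D.f y = x + 1 := hinvol _ _ hy.symm
    have hym : y ≠ m := by
      intro h
      rw [h, hbdtop] at hbd2
      omega
    have hylt : y < m := by omega
    have hfy1 : D.f (y + 1) = x := by
      have : D.bd y = D.f (y + 1) := by
        show D.f (gammaOne k y) = _
        rw [hgam y hylt]
      rw [this] at hbd2; exact hbd2
    have hfx : D.f x = y + 1 := hinvol _ _ hfy1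
    have hyx : y ≠ x := by
      intro h
      exact no_fix x hx (hγx.trans h)
    have hyx1 : y ≠ x + 1 := by
      intro h
      exact hfp (x + 1) (by omega) (by rw [← hy, h])
    have hxy1 : x ≠ y + 1 := by
      intro h
      exact hfp (y + 1) (by omega) (hfy1.trans h)
    rcases lt_trichotomy x y with hlt | heq | hgt
    · have harc1 : D.arc x (y + 1) := ⟨by omega, hfx⟩
      have harc2 : D.arc (x + 1) ((y + 1) - 1) := ⟨by omega, by simp only [Nat.add_sub_cancel]; exact hy.symm⟩
      exact hs2 x (y + 1) harc1 harc2 (by simp only [Nat.add_sub_cancel]; omega)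
    · exact hyx heq.symm
    · have harc1 : D.arc y (x + 1) := ⟨by omega, hfy⟩
      have harc2 : D.arc (y + 1) ((x + 1) - 1) := ⟨by omega, by simp only [Nat.add_sub_cancel]; exact hfy1⟩
      exact hs2 y (x + 1) harc1 harc2 (by simp only [Nat.add_sub_cancel]; omega)
  have h3t : 3 * t.card ≤ m := by
    have hmain := Finset.mul_card_image_le_card (Finset.range m) 3 (f := orbitOf D.bd) ?_
    · simpa using hmain
    intro S hS
    obtain ⟨x, hx, hox⟩ := Finset.mem_image.mp hS
    rw [Finset.mem_range] at hx
    have hxk : x < k := by omega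
    set y := D.bd x with hy
    set z := D.bd y with hz
    have hyk : y < k := hbdmap x hxk
    have horb_y : orbitOf D.bd y = orbitOf D.bd x :=
      orbit_eq_of_mem hbdinj hbdmap hxk ⟨1, rfl⟩
    have horb_z : orbitOf D.bd z = orbitOf D.bd x :=
      orbit_eq_of_mem hbdinj hbdmap hxk ⟨2, rfl⟩
    have hym : y ≠ m := by
      intro h
      have hmm : orbitOf D.bd x = {m} := by rw [← horb_y, h, htop_orbit]
      have hxx : x ∈ orbitOf D.bd x := ⟨0, rfl⟩
      rw [hmm] at hxx
      simp only [Set.mem_singleton_iff] at hxx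
      omega
    have hzk : z < k := hbdmap y hyk
    have hzm : z ≠ m := by
      intro h
      have hmm : orbitOf D.bd x = {m} := by rw [← horb_z, h, htop_orbit]
      have hxx : x ∈ orbitOf D.bd x := ⟨0, rfl⟩
      rw [hmm] at hxx
      simp only [Set.mem_singleton_iff] at hxx
      omega
    have hxy : x ≠ y := fun h => no_fix x hx h.symm
    have hxz : x ≠ z := fun h => no_two x hx h.symm
    have hyz : y ≠ z := fun h => no_fix y (by omega) h.symm
    have hsub : ({x, y, z} : Finset ℕ) ⊆
        (Finset.range m).filter (fun w => orbitOf D.bd w = S) := by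
      intro w hw
      simp only [Finset.mem_insert, Finset.mem_singleton] at hw
      rw [Finset.mem_filter, Finset.mem_range]
      rcases hw with rfl | rfl | rfl
      · exact ⟨hx, hox⟩
      · exact ⟨by omega, by rw [horb_y]; exact hox⟩
      · exact ⟨by omega, by rw [horb_z]; exact hox⟩
    have h3 : ({x, y, z} : Finset ℕ).card = 3 := by
      rw [Finset.card_insert_of_notMem (by simp [hxy, hxz]),
          Finset.card_insert_of_notMem (by simp [hyz]), Finset.card_singleton]
    calc 3 = ({x, y, z} : Finset ℕ).card := h3.symm
      _ ≤ _ := Finset.card_le_card hsub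
  omega


end RNA
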